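/- Let f : (ZMod 2)^n → ZMod 2 with f⁻¹(1) = {z : ⟨a_1,z⟩ = 1 ∨ ⟨a_2,z⟩ = 1} for linearly independent a_1, a_2 ∈ (ZMod 2)^n. Then f is not (C_5, 00111)-free: there exist x_1,...,x_5 with x_1+...+x_5 = 0, f(x_1)=f(x_2)=0, and f(x_3)=f(x_4)=f(x_5)=1. -/
import Mathlib


open Finset

private lemma single_dot {n : ℕ} (c : Fin n → ZMod 2) (i : Fin n) :
    ∑ j, c j * (Pi.single i 1 : Fin n → ZMod 2) j = c i := by
  simp [Pi.single_apply, mul_ite, Finset.sum_ite_eq']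

private lemma zmod2_cases (x : ZMod 2) : x = 0 ∨ x = 1 := by revert x; decide

private lemma exists_dual {n : ℕ} (a b : Fin n → ZMod 2) (ha : a ≠ 0) (hab : a ≠ b) :
    ∃ x : Fin n → ZMod 2, ∑ j, a j * x j = 1 ∧ ∑ j, b j * x j = 0 := by
  by_cases h : ∃ i, a i = 1 ∧ b i = 0
  · obtain ⟨i, hai, hbi⟩ := h
    exact ⟨Pi.single i 1, by rw [single_dot, hai], by rw [single_dot, hbi]⟩
  · push_neg at h
    have h' : ∀ i, a i = 1 → b i = 1 := by
      intro i hi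
      rcases zmod2_cases (b i) with hb | hb
      · exact absurd hb (h i hi)
      · exact hb
    obtain ⟨i, hi⟩ : ∃ i, a i ≠ 0 := by
      by_contra hc
      push_neg at hc
      exact ha (funext hc)
    have hai : a i = 1 := (zmod2_cases (a i)).resolve_left hi
    have hbi : b i = 1 := h' i hai
    obtain ⟨j, hj⟩ : ∃ j, a j ≠ b j := by
      by_contra hc
      push_neg at hc
      exact hab (funext hc)
    have haj : a j = 0 := by
      rcases zmod2_cases (a j) with h0 | h1
      · exact h0
      · exact absurd (h1.trans (h' j h1).symm) hj
    have hbj : b j = 1 := by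
      rcases zmod2_cases (b j) with h0 | h1
      · exact absurd (haj.trans h0.symm) hj
      · exact h1
    refine ⟨Pi.single i 1 + Pi.single j 1, ?_, ?_⟩ <;>
        simp only [Pi.add_apply, mul_add, Finset.sum_add_distrib, single_dot,
          hai, haj, hbi, hbj]
    · exact add_zero 1
    · decide

/-- A disjunction of two linearly independent linear functions is not
`(C_5, 00111)`-free. -/
theorem two_linear_disjunction_not_c5_free {n : ℕ}
    (f : (Fin n → ZMod 2) → ZMod 2)
    (a₁ a₂ : Fin n → ZMod 2) (hind : LinearIndependent (ZMod 2) ![a₁, a₂])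
    (hf : ∀ z, f z = 1 ↔ (∑ j, a₁ j * z j = 1 ∨ ∑ j, a₂ j * z j = 1)) :
    ∃ x₁ x₂ x₃ x₄ x₅ : Fin n → ZMod 2,
      x₁ + x₂ + x₃ + x₄ + x₅ = 0 ∧
      f x₁ = 0 ∧ f x₂ = 0 ∧ f x₃ = 1 ∧ f x₄ = 1 ∧ f x₅ = 1 := by
  have ha₁ : a₁ ≠ 0 := by
    have := hind.ne_zero 0; simpa using this
  have ha₂ : a₂ ≠ 0 := by
    have := hind.ne_zero 1; simpa using this
  have hne : a₁ ≠ a₂ := by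
    intro h
    have h01 : (0 : Fin 2) = 1 := hind.injective (by simp [h])
    exact absurd h01 (by decide)
  obtain ⟨x, hx1, hx2⟩ := exists_dual a₁ a₂ ha₁ hne
  obtain ⟨y, hy2, hy1⟩ := exists_dual a₂ a₁ ha₂ hne.symm
  have hzero : f 0 = 0 := by
    rcases zmod2_cases (f 0) with h | h
    · exact h
    · rw [hf] at h
      simp at h
  refine ⟨0, 0, x, y, x + y, ?_, hzero, hzero, ?_, ?_, ?_⟩
  · funext i
    have key : ∀ u v : ZMod 2, 0 + 0 + u + v + (u + v) = 0 := by decide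
    simpa using key (x i) (y i)
  · exact (hf x).2 (Or.inl hx1)
  · exact (hf y).2 (Or.inr hy2)
  · refine (hf (x + y)).2 (Or.inl ?_)
    simp only [Pi.add_apply, mul_add, Finset.sum_add_distrib, hx1, hy1, add_zero]
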